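/- For every natural number n, the game G_n over L5 is monotone. -/

import Mathlib

universe u

/-- Pre-games (removed from Mathlib; restored here with their old definition). -/
inductive SetTheory.PGame : Type (u + 1)
  | mk : ∀ α β : Type u, (α → SetTheory.PGame) → (β → SetTheory.PGame) → SetTheory.PGame

/-- The pre-game `0 = { | }`, as in the old Mathlib. -/
instance SetTheory.PGame.instZeroPGame : Zero SetTheory.PGame :=
  ⟨⟨PEmpty, PEmpty, PEmpty.elim, PEmpty.elim⟩⟩

/-- Combinatorial games over a poset `A` of atoms: either an atomic game `[a]` for an atom
`a : A`, or a composite game `⟨L|R⟩` where `L` and `R` are nonempty families of games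
(the left and right options). -/
inductive PoGame (A : Type u) : Type (u + 1) where
  | atom : A → PoGame A
  | mk : (xl xr : Type u) → (xl → PoGame A) → (xr → PoGame A) →
      Nonempty xl → Nonempty xr → PoGame A

namespace PoGame

variable {A : Type u}

/-- `G` is an atomic game. -/
def IsAtomic : PoGame A → Prop
  | atom _ => True
  | mk _ _ _ _ _ _ => False

/-- `G` is a left option of the game given as second argument. -/
def IsLeftOption (G : PoGame A) : PoGame A → Prop
  | atom _ => False
  | mk _ _ L _ _ _ => ∃ i, L i = G

/-- `G` is a right option of the game given as second argument. -/
def IsRightOption (G : PoGame A) : PoGame A → Prop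
  | atom _ => False
  | mk _ _ _ R _ _ => ∃ j, R j = G

section Order

variable [PartialOrder A]

mutual
  /-- `Le G H` is the relation `G ≤ H` on games over the poset `A`, defined by mutual
  recursion with `Lf` (the relation `G ⊲ H`): `G ≤ H` iff every left option `G^L`
  satisfies `G^L ⊲ H`, every right option `H^R` satisfies `G ⊲ H^R`, and if `G` or `H`
  is atomic then `G ⊲ H`. -/
  inductive Le : PoGame A → PoGame A → Prop
    | intro (G H : PoGame A)
        (hL : ∀ G', IsLeftOption G' G → Lf G' H)
        (hR : ∀ H', IsRightOption H' H → Lf G H')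
        (hA : IsAtomic G ∨ IsAtomic H → Lf G H) : Le G H

  /-- `Lf G H` is the relation `G ⊲ H` on games over the poset `A`: it holds iff some
  right option `G^R` satisfies `G^R ≤ H`, or some left option `H^L` satisfies `G ≤ H^L`,
  or `G = [a]` and `H = [b]` are atomic with `a ≤ b` in `A`. -/
  inductive Lf : PoGame A → PoGame A → Prop
    | rightOption (G H G' : PoGame A) (h : IsRightOption G' G) (hle : Le G' H) : Lf G H
    | leftOption (G H H' : PoGame A) (h : IsLeftOption H' H) (hle : Le G H') : Lf G H
    | atom (a b : A) (hab : a ≤ b) : Lf (atom a) (atom b)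
end

/-- Two games are equivalent if `G ≤ H` and `H ≤ G`. -/
def GEquiv (G H : PoGame A) : Prop := Le G H ∧ Le H G

/-- `G` is locally monotone if `G ≤ G^L` for every left option `G^L` and `G^R ≤ G` for
every right option `G^R`. -/
def LocallyMonotone (G : PoGame A) : Prop :=
  (∀ G', IsLeftOption G' G → Le G G') ∧ (∀ G', IsRightOption G' G → Le G' G)

/-- `G` is an option (left or right) of `H`. -/
def IsOption (G H : PoGame A) : Prop := IsLeftOption G H ∨ IsRightOption G H

/-- `G` is a position of `H`: `H` itself, an option of `H`, an option of an option, etc. -/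
def IsPosition (G H : PoGame A) : Prop := Relation.ReflTransGen IsOption G H

/-- `G` is monotone if every position of `G` is locally monotone. -/
def Monotone (G : PoGame A) : Prop := ∀ K, IsPosition K G → LocallyMonotone K

end Order

/-- The 5-element linearly ordered set `L5 = {-3, -2, -1, 0, 1}`. -/
abbrev L5 : Type := {a : ℤ // -3 ≤ a ∧ a ≤ 1}

/-- `G` has mean `C`: an atomic game `[a]` has mean `a`, and a composite game has mean `C`
iff every left option has mean `C + 1` and every right option has mean `C - 1`. -/
def HasMean : PoGame L5 → ℤ → Prop
  | atom a, C => (a : ℤ) = C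
  | mk _ _ L R _ _, C => (∀ i, HasMean (L i) (C + 1)) ∧ (∀ j, HasMean (R j) (C - 1))

/-- The game `⟨G | H⟩` with a single left option `G` and a single right option `H`. -/
def ofPair (G H : PoGame A) : PoGame A :=
  mk PUnit PUnit (fun _ => G) (fun _ => H) ⟨PUnit.unit⟩ ⟨PUnit.unit⟩

/-- `⋆ = ⟨-1 | -3⟩`. -/
def star : PoGame L5 := ofPair (atom ⟨-1, by norm_num⟩) (atom ⟨-3, by norm_num⟩)

/-- `M(G) = ⟨1 | G⟩`. -/
def M (G : PoGame L5) : PoGame L5 := ofPair (atom ⟨1, by norm_num⟩) G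

/-- `P(G) = ⟨G | -2⟩`. -/
def P (G : PoGame L5) : PoGame L5 := ofPair G (atom ⟨-2, by norm_num⟩)

/-- `P⋆(G) = ⟨G | ⋆⟩`. -/
def Pstar (G : PoGame L5) : PoGame L5 := ofPair G star

/-- `Pn n G = P G` if `n` is odd, `P⋆ G` if `n` is even. -/
def Pn (n : ℕ) (G : PoGame L5) : PoGame L5 := if Odd n then P G else Pstar G

/-- The sequence `G_0 = [0]`, `G_{n+1} = M (Pn n (G_n))`. -/
def Gseq : ℕ → PoGame L5
  | 0 => atom ⟨0, by norm_num⟩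
  | n + 1 => M (Pn n (Gseq n))

/-- The normal-play game obtained from a game over `L5` by replacing every atom by the
normal-play game `0 = { | }`, keeping the tree of left and right options. -/
def np : PoGame L5 → SetTheory.PGame.{0}
  | atom _ => 0
  | mk xl xr L R _ _ => SetTheory.PGame.mk xl xr (fun i => np (L i)) (fun j => np (R j))

end PoGame

namespace MonoAux

open PoGame

abbrev t1 : L5 := ⟨1, by norm_num⟩
abbrev t0 : L5 := ⟨0, by norm_num⟩
abbrev tm1 : L5 := ⟨-1, by norm_num⟩
abbrev tm2 : L5 := ⟨-2, by norm_num⟩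
abbrev tm3 : L5 := ⟨-3, by norm_num⟩

section Generic

variable {A : Type u} [PartialOrder A]

lemma not_isLeftOption_atom {K : PoGame A} {a : A} : ¬ IsLeftOption K (atom a) := fun h => h
lemma not_isRightOption_atom {K : PoGame A} {a : A} : ¬ IsRightOption K (atom a) := fun h => h

lemma isLeftOption_ofPair {G H K : PoGame A} (h : IsLeftOption K (ofPair G H)) : K = G := by
  obtain ⟨i, hi⟩ := h; exact hi.symm

lemma isRightOption_ofPair {G H K : PoGame A} (h : IsRightOption K (ofPair G H)) : K = H := by
  obtain ⟨i, hi⟩ := h; exact hi.symm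

lemma lf_ofPair_left {X G H : PoGame A} (h : Le X G) : Lf X (ofPair G H) :=
  Lf.leftOption _ _ G ⟨PUnit.unit, rfl⟩ h

lemma lf_ofPair_right {G H Y : PoGame A} (h : Le H Y) : Lf (ofPair G H) Y :=
  Lf.rightOption _ _ H ⟨PUnit.unit, rfl⟩ h

lemma le_atom_atom {a b : A} (h : a ≤ b) : Le (atom a) (atom b) :=
  Le.intro _ _ (fun _ h' => absurd h' not_isLeftOption_atom)
    (fun _ h' => absurd h' not_isRightOption_atom) (fun _ => Lf.atom a b h)

lemma atom_le_ofPair {a : A} {G H : PoGame A} (hR : Lf (atom a) H)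
    (hA : Lf (atom a) (ofPair G H)) : Le (atom a) (ofPair G H) :=
  Le.intro _ _ (fun _ h' => absurd h' not_isLeftOption_atom)
    (fun H' h' => (isRightOption_ofPair h') ▸ hR) (fun _ => hA)

lemma ofPair_le_atom {G H : PoGame A} {b : A} (hL : Lf G (atom b))
    (hA : Lf (ofPair G H) (atom b)) : Le (ofPair G H) (atom b) :=
  Le.intro _ _ (fun G' h' => (isLeftOption_ofPair h') ▸ hL)
    (fun _ h' => absurd h' not_isRightOption_atom) (fun _ => hA)

lemma ofPair_le_ofPair {G H G' H' : PoGame A} (hL : Lf G (ofPair G' H'))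
    (hR : Lf (ofPair G H) H') : Le (ofPair G H) (ofPair G' H') :=
  Le.intro _ _ (fun K h' => (isLeftOption_ofPair h') ▸ hL)
    (fun K h' => (isRightOption_ofPair h') ▸ hR)
    (fun h => absurd h (by rintro (h | h) <;> exact h))

lemma not_isOption_atom {K : PoGame A} {a : A} : ¬ IsOption K (atom a) := by
  rintro (h | h) <;> exact h

lemma isPosition_atom {K : PoGame A} {a : A} (h : IsPosition K (atom a)) : K = atom a := by
  rcases h.cases_tail with h | ⟨c, _, hstep⟩
  · exact h.symm
  · exact absurd hstep not_isOption_atom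

lemma isPosition_ofPair {G H K : PoGame A} (h : IsPosition K (ofPair G H)) :
    K = ofPair G H ∨ IsPosition K G ∨ IsPosition K H := by
  rcases h.cases_tail with h | ⟨c, hc, hstep⟩
  · exact Or.inl h.symm
  · rcases hstep with hl | hr
    · exact Or.inr (Or.inl ((isLeftOption_ofPair hl) ▸ hc))
    · exact Or.inr (Or.inr ((isRightOption_ofPair hr) ▸ hc))

lemma locallyMonotone_atom (a : A) : LocallyMonotone (atom a) :=
  ⟨fun _ h => absurd h not_isLeftOption_atom, fun _ h => absurd h not_isRightOption_atom⟩

lemma monotone_atom (a : A) : PoGame.Monotone (atom a) := by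
  intro K hK
  rw [isPosition_atom hK]
  exact locallyMonotone_atom a

lemma monotone_ofPair {G H : PoGame A} (hG : PoGame.Monotone G) (hH : PoGame.Monotone H)
    (hGle : Le (ofPair G H) G) (hHle : Le H (ofPair G H)) :
    PoGame.Monotone (ofPair G H) := by
  intro K hK
  rcases isPosition_ofPair hK with rfl | h | h
  · exact ⟨fun K' h' => (isLeftOption_ofPair h') ▸ hGle,
      fun K' h' => (isRightOption_ofPair h') ▸ hHle⟩
  · exact hG K h
  · exact hH K h

end Generic

-- Order facts on L5 atoms
lemma hle (a b : ℤ) (ha : -3 ≤ a ∧ a ≤ 1) (hb : -3 ≤ b ∧ b ≤ 1) (h : a ≤ b) :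
    (⟨a, ha⟩ : L5) ≤ ⟨b, hb⟩ := h

lemma star_le_neg1 : Le star (atom tm1) :=
  ofPair_le_atom (Lf.atom tm1 tm1 le_rfl) (lf_ofPair_right (le_atom_atom (by norm_num [Subtype.mk_le_mk])))

lemma neg3_le_star : Le (atom tm3) star :=
  atom_le_ofPair (Lf.atom tm3 tm3 le_rfl) (lf_ofPair_left (le_atom_atom (by norm_num [Subtype.mk_le_mk])))

lemma lf_star_star : Lf star star := lf_ofPair_right neg3_le_star

lemma star_le_one : Le star (atom t1) :=
  ofPair_le_atom (Lf.atom tm1 t1 (by norm_num [Subtype.mk_le_mk]))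
    (lf_ofPair_right (le_atom_atom (by norm_num [Subtype.mk_le_mk])))

lemma monotone_star : PoGame.Monotone star :=
  monotone_ofPair (monotone_atom tm1) (monotone_atom tm3) star_le_neg1 neg3_le_star

lemma atom_le_Gseq {a : L5} (ha : (a : ℤ) ≤ 0) : ∀ n, Le (atom a) (Gseq n) := by
  intro n
  induction n with
  | zero => exact le_atom_atom ha
  | succ n ih =>
    show Le (atom a) (ofPair (atom t1) (Pn n (Gseq n)))
    refine atom_le_ofPair ?_ (lf_ofPair_left (le_atom_atom (show (a:ℤ) ≤ 1 from a.2.2)))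
    unfold Pn
    split
    · exact lf_ofPair_left ih
    · exact lf_ofPair_left ih

lemma H_le_one : ∀ n, Le (Pn n (Gseq n)) (atom t1) := by
  intro n
  induction n with
  | zero =>
    show Le (ofPair (Gseq 0) star) (atom t1)
    exact ofPair_le_atom (Lf.atom t0 t1 (by norm_num [Subtype.mk_le_mk]))
      (lf_ofPair_right star_le_one)
  | succ n ih =>
    have hG : Lf (Gseq (n + 1)) (atom t1) := lf_ofPair_right ih
    unfold Pn
    split
    · exact ofPair_le_atom hG
        (lf_ofPair_right (le_atom_atom (by norm_num [Subtype.mk_le_mk])))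
    · exact ofPair_le_atom hG (lf_ofPair_right star_le_one)

lemma G_le_one : ∀ n, Le (Gseq n) (atom t1)
  | 0 => le_atom_atom (by norm_num [Subtype.mk_le_mk])
  | n + 1 => ofPair_le_atom (Lf.atom t1 t1 le_rfl) (lf_ofPair_right (H_le_one n))

lemma lf_G_G (n : ℕ) : Lf (Gseq n) (Gseq n) := by
  cases n with
  | zero => exact Lf.atom t0 t0 le_rfl
  | succ n => exact lf_ofPair_left (G_le_one (n + 1))

lemma neg2_le_pair {G Y : PoGame L5} (hG : Le (atom tm2) G) (hY : Lf (atom tm2) Y) :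
    Le (atom tm2) (ofPair G Y) :=
  atom_le_ofPair hY (lf_ofPair_left hG)

lemma star_le_pair {G Y : PoGame L5} (hG : Le (atom tm1) G) (hY : Lf star Y) :
    Le star (ofPair G Y) :=
  ofPair_le_ofPair (lf_ofPair_left hG) hY

lemma neg2_le_H (n : ℕ) : Le (atom tm2) (Pn n (Gseq n)) := by
  unfold Pn
  split
  · exact neg2_le_pair (atom_le_Gseq (by norm_num) n) (Lf.atom tm2 tm2 le_rfl)
  · exact neg2_le_pair (atom_le_Gseq (by norm_num) n)
      (Lf.leftOption _ _ (atom tm1) ⟨PUnit.unit, rfl⟩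
        (le_atom_atom (by norm_num [Subtype.mk_le_mk])))

lemma star_le_H (n : ℕ) : Le star (Pn n (Gseq n)) := by
  unfold Pn
  split
  · exact star_le_pair (atom_le_Gseq (by norm_num) n)
      (lf_ofPair_right (le_atom_atom (by norm_num [Subtype.mk_le_mk])))
  · exact star_le_pair (atom_le_Gseq (by norm_num) n) lf_star_star

lemma Pn_le_G : ∀ n, Le (Pn n (Gseq n)) (Gseq n) := by
  intro n
  cases n with
  | zero =>
    show Le (ofPair (Gseq 0) star) (atom t0)
    exact ofPair_le_atom (Lf.atom t0 t0 le_rfl)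
      (lf_ofPair_right (ofPair_le_atom (Lf.atom tm1 t0 (by norm_num [Subtype.mk_le_mk]))
        (lf_ofPair_right (le_atom_atom (by norm_num [Subtype.mk_le_mk])))))
  | succ m =>
    have hL : Lf (Gseq (m + 1)) (Gseq (m + 1)) := lf_G_G (m + 1)
    have hGm : Gseq (m + 1) = ofPair (atom t1) (Pn m (Gseq m)) := rfl
    unfold Pn
    split
    · -- m + 1 odd, goal: P (Gseq (m+1)) ≤ Gseq (m+1)
      rw [hGm]
      exact ofPair_le_ofPair (hGm ▸ hL) (lf_ofPair_right (neg2_le_H m))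
    · -- m + 1 even
      rw [hGm]
      exact ofPair_le_ofPair (hGm ▸ hL) (lf_ofPair_right (star_le_H m))

lemma H_le_MH (n : ℕ) : Le (Pn n (Gseq n)) (M (Pn n (Gseq n))) := by
  have hHG : Le (Pn n (Gseq n)) (Gseq n) := Pn_le_G n
  have hG1 : Le (Gseq n) (atom t1) := G_le_one n
  show Le (Pn n (Gseq n)) (ofPair (atom t1) (Pn n (Gseq n)))
  by_cases h : Odd n
  · rw [Pn, if_pos h] at hHG ⊢
    exact ofPair_le_ofPair (lf_ofPair_left hG1) (lf_ofPair_left hHG)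
  · rw [Pn, if_neg h] at hHG ⊢
    exact ofPair_le_ofPair (lf_ofPair_left hG1) (lf_ofPair_left hHG)

lemma X_le_H (n : ℕ) : LocallyMonotone (Pn n (Gseq n)) := by
  have hHG := Pn_le_G n
  by_cases hp : Odd n
  · rw [Pn, if_pos hp] at hHG ⊢
    constructor
    · intro K h; rw [isLeftOption_ofPair h]; exact hHG
    · intro K h; rw [isRightOption_ofPair h]
      exact neg2_le_pair (atom_le_Gseq (by norm_num) n) (Lf.atom tm2 tm2 le_rfl)
  · rw [Pn, if_neg hp] at hHG ⊢
    constructor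
    · intro K h; rw [isLeftOption_ofPair h]; exact hHG
    · intro K h; rw [isRightOption_ofPair h]
      exact star_le_pair (atom_le_Gseq (by norm_num) n) lf_star_star

lemma monotone_H (n : ℕ) (ihn : PoGame.Monotone (Gseq n)) :
    PoGame.Monotone (Pn n (Gseq n)) := by
  have hlm := X_le_H n
  by_cases hp : Odd n
  · rw [Pn, if_pos hp] at hlm ⊢
    refine monotone_ofPair ihn (monotone_atom tm2) ?_ ?_
    · exact hlm.1 (Gseq n) ⟨PUnit.unit, rfl⟩
    · exact hlm.2 (atom tm2) ⟨PUnit.unit, rfl⟩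
  · rw [Pn, if_neg hp] at hlm ⊢
    refine monotone_ofPair ihn monotone_star ?_ ?_
    · exact hlm.1 (Gseq n) ⟨PUnit.unit, rfl⟩
    · exact hlm.2 star ⟨PUnit.unit, rfl⟩

end MonoAux

open PoGame in
/-- For every natural number `n`, the game `G_n` is monotone. -/
theorem stmt_3 (n : ℕ) : PoGame.Monotone (Gseq n) := by
  induction n with
  | zero => exact MonoAux.monotone_atom _
  | succ n ih =>
    show PoGame.Monotone (ofPair (atom MonoAux.t1) (Pn n (Gseq n)))
    exact MonoAux.monotone_ofPair (MonoAux.monotone_atom _) (MonoAux.monotone_H n ih)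
      (MonoAux.G_le_one (n + 1)) (MonoAux.H_le_MH n)
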